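/- arXiv:1511.03340 — 2 statements merged into one kernel-verified Lean document; each statement's English description precedes it below -/
import Mathlib

section
/- For every l ≥ 1 and k ≥ 0, the map Δ^l from the space of homogeneous polynomials of degree k in two variables to the space of homogeneous polynomials of degree k − 2l (interpreted as 0 if k < 2l) is surjective; consequently the space of homogeneous l-harmonic polynomials of degree k has dimension min(k+1, 2l). -/
open MvPolynomial

/-- The Laplacian on real polynomials in two variables, as a linear map. -/
noncomputable def lapL : MvPolynomial (Fin 2) ℝ →ₗ[ℝ] MvPolynomial (Fin 2) ℝ :=
  ((pderiv 0).toLinearMap ∘ₗ (pderiv 0).toLinearMap) +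
  ((pderiv 1).toLinearMap ∘ₗ (pderiv 1).toLinearMap)

/-- `f_k = Re((x+iy)^k)` as a polynomial. -/
noncomputable def fkPoly (k : ℕ) : MvPolynomial (Fin 2) ℝ :=
  ∑ j ∈ Finset.range (k+1),
    MvPolynomial.C (if j % 2 = 0 then ((-1:ℝ)^(j/2)) * (k.choose j : ℝ) else 0) *
      X 0 ^ (k - j) * X 1 ^ j

/-- `g_k = Im((x+iy)^k)` as a polynomial. -/
noncomputable def gkPoly (k : ℕ) : MvPolynomial (Fin 2) ℝ :=
  ∑ j ∈ Finset.range (k+1),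
    MvPolynomial.C (if j % 2 = 1 then ((-1:ℝ)^(j/2)) * (k.choose j : ℝ) else 0) *
      X 0 ^ (k - j) * X 1 ^ j

/-- Composition of a polynomial with the linear map given by a matrix: `(p ∘ M)(v) = p (M v)`. -/
noncomputable def matComp (M : Matrix (Fin 2) (Fin 2) ℝ) (p : MvPolynomial (Fin 2) ℝ) :
    MvPolynomial (Fin 2) ℝ :=
  aeval (fun i => MvPolynomial.C (M i 0) * X 0 + MvPolynomial.C (M i 1) * X 1) p

section Aux

lemma degree_two (d : Fin 2 →₀ ℕ) : d.degree = d 0 + d 1 := by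
  rw [Finsupp.degree, ← Fin.sum_univ_two (fun i => d i)]
  exact Finset.sum_subset (Finset.subset_univ _) (by
    intro x _ hx; simpa using Finsupp.notMem_support_iff.mp hx)

lemma isHomog_iff_degree {p : MvPolynomial (Fin 2) ℝ} {n : ℕ} :
    p.IsHomogeneous n ↔ ∀ d ∈ p.support, Finsupp.degree d = n := by
  constructor
  · intro h d hd
    rw [Finsupp.degree_eq_weight_one]
    exact h (MvPolynomial.mem_support_iff.mp hd)
  · intro h d hd
    show Finsupp.weight (fun _ : Fin 2 => (1:ℕ)) d = n
    rw [← Finsupp.degree_eq_weight_one]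
    exact h d (MvPolynomial.mem_support_iff.mpr hd)

lemma pderiv_isHomog {p : MvPolynomial (Fin 2) ℝ} {n : ℕ} (h : p.IsHomogeneous n) (i : Fin 2) :
    (pderiv i p).IsHomogeneous (n - 1) := by
  rw [p.as_sum, map_sum]
  apply MvPolynomial.IsHomogeneous.sum
  intro v hv
  rw [pderiv_monomial]
  by_cases hvi : v i = 0
  · rw [hvi]; simp [isHomogeneous_zero]
  · apply isHomogeneous_monomial
    have hd : v.degree = n := isHomog_iff_degree.mp h v hv
    rw [degree_two] at hd
    rw [degree_two]; simp only [Finsupp.tsub_apply]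
    fin_cases i <;> simp [Finsupp.single_apply] at hvi ⊢ <;> omega

lemma lapL_apply' (p : MvPolynomial (Fin 2) ℝ) :
    lapL p = pderiv 0 (pderiv 0 p) + pderiv 1 (pderiv 1 p) := rfl

/-- `D a b` is the exponent vector of `x^a y^b`. -/
noncomputable def D (a b : ℕ) : Fin 2 →₀ ℕ := Finsupp.single 0 a + Finsupp.single 1 b

lemma D_apply0 (a b : ℕ) : D a b 0 = a := by simp [D]
lemma D_apply1 (a b : ℕ) : D a b 1 = b := by simp [D, Finsupp.single_apply]
lemma D_degree (a b : ℕ) : (D a b).degree = a + b := by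
  rw [degree_two, D_apply0, D_apply1]

lemma eq_D (d : Fin 2 →₀ ℕ) : d = D (d 0) (d 1) := by
  ext j; fin_cases j <;> simp [D, Finsupp.single_apply]

lemma D_sub0 (a b : ℕ) : D (a+1) b - Finsupp.single 0 1 = D a b := by
  ext j; fin_cases j <;> simp [D, Finsupp.single_apply]

lemma D_sub1 (a b : ℕ) : D a (b+1) - Finsupp.single 1 1 = D a b := by
  ext j; fin_cases j <;> simp [D, Finsupp.single_apply]

lemma lapL_monomial (a b : ℕ) (c : ℝ) :
    lapL (monomial (D (a+2) b) c) =
      monomial (D a b) (c * ((a+2)*(a+1))) +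
      monomial (D (a+2) (b-2)) (c * ((b:ℝ)*((b:ℝ)-1))) := by
  rw [lapL_apply', pderiv_monomial, pderiv_monomial]
  rw [show D (a+2) b - (Finsupp.single 0 1) = D (a+1) b from D_sub0 (a+1) b]
  rw [pderiv_monomial, D_sub0, D_apply0, D_apply0]
  rcases b with _ | b
  · simp [pderiv_monomial, D_apply1]; ring
  · rw [show D (a+2) (b+1) - (Finsupp.single 1 1) = D (a+2) b from D_sub1 (a+2) b]
    rw [pderiv_monomial, D_apply1]
    rcases b with _ | b
    · simp [D_apply1]; ring
    · rw [show D (a+2) (b+1) - (Finsupp.single 1 1) = D (a+2) b from D_sub1 (a+2) b,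
        D_apply1, show b+1+1-2 = b from rfl]
      congr 1
      · congr 1; push_cast; ring
      · congr 1; push_cast; ring

lemma mono_preimage : ∀ b a : ℕ, ∀ c : ℝ, ∃ p : MvPolynomial (Fin 2) ℝ,
    p.IsHomogeneous (a + b + 2) ∧ lapL p = monomial (D a b) c := by
  intro b
  induction b using Nat.strong_induction_on with
  | _ b IH =>
    intro a c
    have hden : ((a:ℝ)+2)*((a:ℝ)+1) ≠ 0 := by positivity
    set c1 : ℝ := c / (((a:ℝ)+2)*((a:ℝ)+1)) with hc1
    have hkey := lapL_monomial a b c1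
    have hc : c1 * (((a:ℝ)+2)*((a:ℝ)+1)) = c := by rw [hc1, div_mul_cancel₀ _ hden]
    by_cases hb : b < 2
    · refine ⟨monomial (D (a+2) b) c1, ?_, ?_⟩
      · exact isHomogeneous_monomial _ (by rw [D_degree]; omega)
      · rw [hkey, hc]
        have : (b:ℝ) * ((b:ℝ)-1) = 0 := by interval_cases b <;> norm_num
        simp [this]
    · push_neg at hb
      obtain ⟨q, hq1, hq2⟩ := IH (b-2) (by omega) (a+2) (-(c1 * ((b:ℝ)*((b:ℝ)-1))))
      refine ⟨monomial (D (a+2) b) c1 + q, ?_, ?_⟩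
      · apply MvPolynomial.IsHomogeneous.add
        · exact isHomogeneous_monomial _ (by rw [D_degree]; omega)
        · convert hq1 using 1; omega
      · rw [map_add, hkey, hc, hq2]
        rw [add_assoc, ← map_add]
        simp

lemma lapL_isHomog {p : MvPolynomial (Fin 2) ℝ} {n : ℕ} (h : p.IsHomogeneous n) :
    (lapL p).IsHomogeneous (n - 2) := by
  rw [lapL_apply']
  have h0 := pderiv_isHomog (pderiv_isHomog h 0) 0
  have h1 := pderiv_isHomog (pderiv_isHomog h 1) 1
  rw [Nat.sub_sub] at h0 h1
  exact h0.add h1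

lemma lapL_pow_isHomog {p : MvPolynomial (Fin 2) ℝ} {n : ℕ} (h : p.IsHomogeneous n) (l : ℕ) :
    ((lapL ^ l) p).IsHomogeneous (n - 2 * l) := by
  induction l generalizing p n with
  | zero => simpa using h
  | succ m IH =>
    rw [pow_succ, Module.End.mul_apply]
    have := IH (lapL_isHomog h)
    rwa [show n - 2 - 2 * m = n - 2 * (m + 1) by omega] at this

lemma pderiv_eq_zero_of_homog0 {p : MvPolynomial (Fin 2) ℝ} (h : p.IsHomogeneous 0) (i : Fin 2) :
    pderiv i p = 0 := by
  rw [p.as_sum, map_sum]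
  apply Finset.sum_eq_zero
  intro v hv
  have hv0 : v = 0 := (Finsupp.degree_eq_zero_iff v).mp (isHomog_iff_degree.mp h v hv)
  rw [pderiv_monomial, hv0]
  simp

lemma lapL_eq_zero_of_le_one {p : MvPolynomial (Fin 2) ℝ} {n : ℕ} (h : p.IsHomogeneous n)
    (hn : n ≤ 1) : lapL p = 0 := by
  rw [lapL_apply']
  have h0 : (pderiv (0 : Fin 2) p).IsHomogeneous 0 := by
    have := pderiv_isHomog h 0; rwa [show n - 1 = 0 by omega] at this
  have h1 : (pderiv (1 : Fin 2) p).IsHomogeneous 0 := by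
    have := pderiv_isHomog h 1; rwa [show n - 1 = 0 by omega] at this
  rw [pderiv_eq_zero_of_homog0 h0, pderiv_eq_zero_of_homog0 h1, add_zero]

lemma lapL_pow_eq_zero {l k : ℕ} (hk : k < 2 * l) {p : MvPolynomial (Fin 2) ℝ}
    (h : p.IsHomogeneous k) : (lapL ^ l) p = 0 := by
  induction l generalizing p k with
  | zero => omega
  | succ m IH =>
    rw [pow_succ, Module.End.mul_apply]
    by_cases hk1 : k ≤ 1
    · rw [lapL_eq_zero_of_le_one h hk1, map_zero]
    · exact IH (k := k - 2) (by omega) (lapL_isHomog h)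

lemma lapL_surj_step {q : MvPolynomial (Fin 2) ℝ} {n : ℕ} (hq : q.IsHomogeneous n) :
    ∃ p : MvPolynomial (Fin 2) ℝ, p.IsHomogeneous (n + 2) ∧ lapL p = q := by
  have H : ∀ v : Fin 2 →₀ ℕ, ∃ p : MvPolynomial (Fin 2) ℝ,
      p.IsHomogeneous (n + 2) ∧ lapL p = monomial v (coeff v q) := by
    intro v
    by_cases hv : v ∈ q.support
    · have hdeg : v 0 + v 1 = n := by
        rw [← degree_two]; exact isHomog_iff_degree.mp hq v hv
      obtain ⟨p, hp1, hp2⟩ := mono_preimage (v 1) (v 0) (coeff v q)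
      exact ⟨p, by rwa [hdeg] at hp1, by rw [hp2, ← eq_D]⟩
    · refine ⟨0, isHomogeneous_zero _ _ _, ?_⟩
      rw [MvPolynomial.notMem_support_iff.mp hv]
      simp
  choose f hf1 hf2 using H
  refine ⟨∑ v ∈ q.support, f v, MvPolynomial.IsHomogeneous.sum _ _ _ (fun v _ => hf1 v), ?_⟩
  rw [map_sum]
  conv_rhs => rw [q.as_sum]
  exact Finset.sum_congr rfl (fun v _ => hf2 v)

lemma lapL_pow_surj {l k : ℕ} (hlk : 2 * l ≤ k) {q : MvPolynomial (Fin 2) ℝ}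
    (hq : q.IsHomogeneous (k - 2 * l)) :
    ∃ p : MvPolynomial (Fin 2) ℝ, p.IsHomogeneous k ∧ (lapL ^ l) p = q := by
  induction l generalizing k with
  | zero => exact ⟨q, by simpa using hq, by simp⟩
  | succ m IH =>
    have h2 : 2 * m ≤ k - 2 := by omega
    obtain ⟨r, hr1, hr2⟩ := IH (k := k - 2) h2
      (by rwa [show k - 2 - 2 * m = k - 2 * (m + 1) by omega])
    obtain ⟨p, hp1, hp2⟩ := lapL_surj_step hr1
    rw [show k - 2 + 2 = k by omega] at hp1
    exact ⟨p, hp1, by rw [pow_succ, Module.End.mul_apply, hp2, hr2]⟩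

/-- The set of exponents of degree n is equivalent to `Fin (n+1)`. -/
noncomputable def degSetEquiv (n : ℕ) : ↑{d : Fin 2 →₀ ℕ | d.degree = n} ≃ Fin (n+1) where
  toFun d := ⟨d.1 0, by
    have h1 := Finsupp.le_degree (0 : Fin 2) d.1
    have h2 : d.1.degree = n := d.2
    omega⟩
  invFun j := ⟨D j (n - j), by show (D (j:ℕ) (n - (j:ℕ))).degree = n; rw [D_degree]; omega⟩
  left_inv d := by
    ext j
    have hd : d.1 0 + d.1 1 = n := by rw [← degree_two]; exact d.2
    fin_cases j <;> simp [D, Finsupp.single_apply] <;> omega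
  right_inv j := by
    ext
    simp [D_apply0]

noncomputable def homogEquiv (n : ℕ) :
    ↥(homogeneousSubmodule (Fin 2) ℝ n) ≃ₗ[ℝ] ({d : Fin 2 →₀ ℕ | d.degree = n} →₀ ℝ) :=
  (LinearEquiv.ofEq _ _ (homogeneousSubmodule_eq_finsupp_supported (Fin 2) ℝ n)).trans
    (AddMonoidAlgebra.supportedEquivFinsupp _)

instance homogFD (n : ℕ) : FiniteDimensional ℝ ↥(homogeneousSubmodule (Fin 2) ℝ n) := by
  have : Fintype ↑{d : Fin 2 →₀ ℕ | d.degree = n} := Fintype.ofEquiv _ (degSetEquiv n).symm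
  exact Module.Finite.equiv (homogEquiv n).symm

lemma finrank_homog (n : ℕ) :
    Module.finrank ℝ ↥(homogeneousSubmodule (Fin 2) ℝ n) = n + 1 := by
  have : Fintype ↑{d : Fin 2 →₀ ℕ | d.degree = n} := Fintype.ofEquiv _ (degSetEquiv n).symm
  rw [(homogEquiv n).finrank_eq, Module.finrank_finsupp]
  rw [Fintype.card_congr (degSetEquiv n)]
  simp

end Aux

/-- `Δ^l` maps homogeneous polynomials of degree `k` onto homogeneous polynomials of
degree `k - 2l`, and the space of homogeneous `l`-harmonic polynomials of degree `k`
has dimension `min (k+1) (2l)`. -/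
theorem lap_pow_surjective_and_dim (l k : ℕ) (hl : 1 ≤ l) :
    (∀ q : MvPolynomial (Fin 2) ℝ, q.IsHomogeneous (k - 2 * l) → 2 * l ≤ k →
      ∃ p : MvPolynomial (Fin 2) ℝ, p.IsHomogeneous k ∧ (lapL ^ l) p = q) ∧
    Module.finrank ℝ
      ↥(MvPolynomial.homogeneousSubmodule (Fin 2) ℝ k ⊓ LinearMap.ker (lapL ^ l)) =
        min (k + 1) (2 * l) := by
  constructor
  · intro q hq hlk
    exact lapL_pow_surj hlk hq
  · set W := homogeneousSubmodule (Fin 2) ℝ k with hW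
    by_cases hk : k < 2 * l
    · have hsub : W ≤ LinearMap.ker (lapL ^ l) := by
        intro p hp
        exact LinearMap.mem_ker.mpr (lapL_pow_eq_zero hk ((mem_homogeneousSubmodule _ _).mp hp))
      rw [inf_eq_left.mpr hsub, finrank_homog k]
      omega
    · push_neg at hk
      set W' := homogeneousSubmodule (Fin 2) ℝ (k - 2 * l) with hW'
      have hmap : ∀ x ∈ W, (lapL ^ l) x ∈ W' := by
        intro x hx
        exact (mem_homogeneousSubmodule _ _).mpr
          (lapL_pow_isHomog ((mem_homogeneousSubmodule _ _).mp hx) l)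
      set F := (lapL ^ l).restrict hmap with hF
      have hker : LinearMap.ker F = Submodule.comap W.subtype (W ⊓ LinearMap.ker (lapL ^ l)) := by
        ext x
        simp only [LinearMap.mem_ker, Submodule.mem_comap, Submodule.mem_inf]
        constructor
        · intro h
          refine ⟨x.2, ?_⟩
          have := congrArg Subtype.val h
          simpa [hF, LinearMap.restrict_apply] using this
        · intro h
          apply Subtype.ext
          simpa [hF, LinearMap.restrict_apply] using h.2
      have hrange : LinearMap.range F = ⊤ := by
        rw [LinearMap.range_eq_top]
        rintro ⟨q, hq⟩
        obtain ⟨p, hp1, hp2⟩ := lapL_pow_surj hk ((mem_homogeneousSubmodule _ _).mp hq)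
        exact ⟨⟨p, (mem_homogeneousSubmodule _ _).mpr hp1⟩,
          Subtype.ext (by simpa [hF, LinearMap.restrict_apply] using hp2)⟩
      have hrn := LinearMap.finrank_range_add_finrank_ker F
      rw [hrange, hker] at hrn
      have e := Submodule.comapSubtypeEquivOfLe
        (inf_le_left : W ⊓ LinearMap.ker (lapL ^ l) ≤ W)
      have e2 : Module.finrank ℝ ↥(Submodule.comap W.subtype (W ⊓ LinearMap.ker (lapL ^ l))) =
          Module.finrank ℝ ↥(W ⊓ LinearMap.ker (lapL ^ l)) := LinearEquiv.finrank_eq e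
      rw [e2, finrank_top, finrank_homog, finrank_homog] at hrn
      omega
end

section
/- For f₄ = x⁴ − 6x²y² + y⁴, with the ideal m = ⟨x,y⟩ and Jacobian ideal J = ⟨4x³ − 12xy², −12x²y + 4y³⟩ in ℝ[x,y], the inclusion m⁵ ⊆ m·J + m⁶ holds, i.e. every monomial of degree 5 in x,y lies in m·J + m⁶. -/
open MvPolynomial

/-- For `f₄ = x⁴ − 6x²y² + y⁴`, with `m = ⟨x,y⟩` and Jacobian ideal
`J = ⟨4x³−12xy², −12x²y+4y³⟩`, one has `m⁵ ⊆ m·J + m⁶` in `ℝ[x,y]`. -/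
theorem f4_jacobian_ideal_inclusion
    (m J : Ideal (MvPolynomial (Fin 2) ℝ))
    (hm : m = Ideal.span {X 0, X 1})
    (hJ : J = Ideal.span
      {MvPolynomial.C 4 * X 0 ^ 3 - MvPolynomial.C 12 * X 0 * X 1 ^ 2,
       -(MvPolynomial.C 12) * X 0 ^ 2 * X 1 + MvPolynomial.C 4 * X 1 ^ 3}) :
    m ^ 5 ≤ m * J + m ^ 6 := by
  have hC4 : (MvPolynomial.C 4 : MvPolynomial (Fin 2) ℝ) = 4 := by simp [map_ofNat]
  have hC12 : (MvPolynomial.C 12 : MvPolynomial (Fin 2) ℝ) = 12 := by simp [map_ofNat]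
  have hxm : (X 0 : MvPolynomial (Fin 2) ℝ) ∈ m := hm ▸ Ideal.subset_span (by simp)
  have hym : (X 1 : MvPolynomial (Fin 2) ℝ) ∈ m := hm ▸ Ideal.subset_span (by simp)
  have hg1 : (4 * X 0 ^ 3 - 12 * X 0 * X 1 ^ 2 : MvPolynomial (Fin 2) ℝ) ∈ J := by
    rw [hJ]; rw [← hC4, ← hC12]; exact Ideal.subset_span (by simp)
  have hg2 : (-12 * X 0 ^ 2 * X 1 + 4 * X 1 ^ 3 : MvPolynomial (Fin 2) ℝ) ∈ J := by
    rw [hJ]; rw [← hC4, ← hC12]; exact Ideal.subset_span (by simp)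
  -- dividing by 32
  have h32 : ∀ p : MvPolynomial (Fin 2) ℝ, 32 * p ∈ m * J → p ∈ m * J := by
    intro p hp
    have e : p = MvPolynomial.C (1/32 : ℝ) * (32 * p) := by
      rw [show (32 : MvPolynomial (Fin 2) ℝ) = MvPolynomial.C (32 : ℝ) by simp [map_ofNat],
        ← mul_assoc, ← C_mul]
      norm_num
    rw [e]; exact Ideal.mul_mem_left _ _ hp
  have k50 : (X 0 : MvPolynomial (Fin 2) ℝ) ^ 5 ∈ m * J := by
    apply h32
    have e : (32 : MvPolynomial (Fin 2) ℝ) * X 0 ^ 5 =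
        (8 * X 0 * X 0) * (4 * X 0 ^ 3 - 12 * X 0 * X 1 ^ 2)
        + ((-3) * X 1 * X 1) * (4 * X 0 ^ 3 - 12 * X 0 * X 1 ^ 2)
        + ((-9) * X 0 * X 1) * (-12 * X 0 ^ 2 * X 1 + 4 * X 1 ^ 3) := by ring
    rw [e]
    exact add_mem (add_mem
      (Ideal.mul_mem_mul (Ideal.mul_mem_left _ _ hxm) hg1)
      (Ideal.mul_mem_mul (Ideal.mul_mem_left _ _ hym) hg1))
      (Ideal.mul_mem_mul (Ideal.mul_mem_left _ _ hym) hg2)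
  have k41 : (X 0 : MvPolynomial (Fin 2) ℝ) ^ 4 * X 1 ∈ m * J := by
    apply h32
    have e : (32 : MvPolynomial (Fin 2) ℝ) * (X 0 ^ 4 * X 1) =
        ((-1) * X 0 * X 1) * (4 * X 0 ^ 3 - 12 * X 0 * X 1 ^ 2)
        + ((-3) * X 0 * X 0) * (-12 * X 0 ^ 2 * X 1 + 4 * X 1 ^ 3) := by ring
    rw [e]
    exact add_mem
      (Ideal.mul_mem_mul (Ideal.mul_mem_left _ _ hym) hg1)
      (Ideal.mul_mem_mul (Ideal.mul_mem_left _ _ hxm) hg2)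
  have k32 : (X 0 : MvPolynomial (Fin 2) ℝ) ^ 3 * X 1 ^ 2 ∈ m * J := by
    apply h32
    have e : (32 : MvPolynomial (Fin 2) ℝ) * (X 0 ^ 3 * X 1 ^ 2) =
        ((-1) * X 1 * X 1) * (4 * X 0 ^ 3 - 12 * X 0 * X 1 ^ 2)
        + ((-3) * X 0 * X 1) * (-12 * X 0 ^ 2 * X 1 + 4 * X 1 ^ 3) := by ring
    rw [e]
    exact add_mem
      (Ideal.mul_mem_mul (Ideal.mul_mem_left _ _ hym) hg1)
      (Ideal.mul_mem_mul (Ideal.mul_mem_left _ _ hym) hg2)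
  have k23 : (X 0 : MvPolynomial (Fin 2) ℝ) ^ 2 * X 1 ^ 3 ∈ m * J := by
    apply h32
    have e : (32 : MvPolynomial (Fin 2) ℝ) * (X 0 ^ 2 * X 1 ^ 3) =
        ((-3) * X 0 * X 1) * (4 * X 0 ^ 3 - 12 * X 0 * X 1 ^ 2)
        + ((-1) * X 0 * X 0) * (-12 * X 0 ^ 2 * X 1 + 4 * X 1 ^ 3) := by ring
    rw [e]
    exact add_mem
      (Ideal.mul_mem_mul (Ideal.mul_mem_left _ _ hym) hg1)
      (Ideal.mul_mem_mul (Ideal.mul_mem_left _ _ hxm) hg2)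
  have k14 : (X 0 : MvPolynomial (Fin 2) ℝ) * X 1 ^ 4 ∈ m * J := by
    apply h32
    have e : (32 : MvPolynomial (Fin 2) ℝ) * (X 0 * X 1 ^ 4) =
        ((-3) * X 1 * X 1) * (4 * X 0 ^ 3 - 12 * X 0 * X 1 ^ 2)
        + ((-1) * X 0 * X 1) * (-12 * X 0 ^ 2 * X 1 + 4 * X 1 ^ 3) := by ring
    rw [e]
    exact add_mem
      (Ideal.mul_mem_mul (Ideal.mul_mem_left _ _ hym) hg1)
      (Ideal.mul_mem_mul (Ideal.mul_mem_left _ _ hym) hg2)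
  have k05 : (X 1 : MvPolynomial (Fin 2) ℝ) ^ 5 ∈ m * J := by
    apply h32
    have e : (32 : MvPolynomial (Fin 2) ℝ) * X 1 ^ 5 =
        (8 * X 1 * X 1) * (-12 * X 0 ^ 2 * X 1 + 4 * X 1 ^ 3)
        + ((-3) * X 0 * X 0) * (-12 * X 0 ^ 2 * X 1 + 4 * X 1 ^ 3)
        + ((-9) * X 0 * X 1) * (4 * X 0 ^ 3 - 12 * X 0 * X 1 ^ 2) := by ring
    rw [e]
    exact add_mem (add_mem
      (Ideal.mul_mem_mul (Ideal.mul_mem_left _ _ hym) hg2)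
      (Ideal.mul_mem_mul (Ideal.mul_mem_left _ _ hxm) hg2))
      (Ideal.mul_mem_mul (Ideal.mul_mem_left _ _ hym) hg1)
  -- reduce m^5 to the span of degree-5 products of generators
  have hpow : m ^ 5 = m * m * m * m * m := by ring
  rw [hpow, hm, Ideal.span_mul_span', Ideal.span_mul_span', Ideal.span_mul_span',
    Ideal.span_mul_span']
  rw [Ideal.span_le]
  rintro z hz
  rcases hz with ⟨a, ha, v, hv, rfl⟩
  rcases ha with ⟨b, hb, w, hw, rfl⟩
  rcases hb with ⟨c, hc, u, hu, rfl⟩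
  rcases hc with ⟨p, hp, q, hq, rfl⟩
  simp only [Set.mem_insert_iff, Set.mem_singleton_iff] at hp hq hu hw hv
  rw [SetLike.mem_coe, Submodule.add_eq_sup]
  apply Submodule.mem_sup_left
  have k41' : (X 1 : MvPolynomial (Fin 2) ℝ) * X 0 ^ 4 ∈ m * J := by
    rw [mul_comm (X 1 : MvPolynomial (Fin 2) ℝ) (X 0 ^ 4)]; exact k41
  have k32' : (X 1 : MvPolynomial (Fin 2) ℝ) ^ 2 * X 0 ^ 3 ∈ m * J := by
    rw [mul_comm ((X 1 : MvPolynomial (Fin 2) ℝ) ^ 2) (X 0 ^ 3)]; exact k32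
  have k23' : (X 1 : MvPolynomial (Fin 2) ℝ) ^ 3 * X 0 ^ 2 ∈ m * J := by
    rw [mul_comm ((X 1 : MvPolynomial (Fin 2) ℝ) ^ 3) (X 0 ^ 2)]; exact k23
  have k14' : (X 1 : MvPolynomial (Fin 2) ℝ) ^ 4 * X 0 ∈ m * J := by
    rw [mul_comm ((X 1 : MvPolynomial (Fin 2) ℝ) ^ 4) (X 0)]; exact k14
  rcases hp with rfl | rfl <;> rcases hq with rfl | rfl <;> rcases hu with rfl | rfl <;>
    rcases hw with rfl | rfl <;> rcases hv with rfl | rfl <;>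
  · rw [← hm]
    ring_nf
    first
      | with_reducible exact k50
      | with_reducible exact k41
      | with_reducible exact k32
      | with_reducible exact k23
      | with_reducible exact k14
      | with_reducible exact k05
      | with_reducible exact k41'
      | with_reducible exact k32'
      | with_reducible exact k23'
      | with_reducible exact k14'
end
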